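/- For n < r ≤ 2n and any vertex x of M_n, the number of r-subsets of V(M_n) containing x and containing a maximum independent set of M_n equals 2^{2n-r} C(n-1, r-n-1) + 2^{2n-r-1} C(n-1, r-n). -/

import Mathlib

/-- The vertex set of the perfect matching `M_n` is modeled as `ZMod (2n)`, with edges
`{v, v + n}`. A set is independent if it contains no matched pair. -/
def Indep (n : ℕ) (S : Finset (ZMod (2 * n))) : Prop :=
  ∀ v ∈ S, v + (n : ZMod (2 * n)) ∉ S

/-- A cyclic ordering of the vertices: positions are `ZMod (2n)`. It is good if matched
vertices are placed exactly `n` apart. -/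
def IsGood (n : ℕ) (c : ZMod (2 * n) ≃ ZMod (2 * n)) : Prop :=
  ∀ x, c (x + (n : ZMod (2 * n))) = c x + (n : ZMod (2 * n))

/-- Two cyclic orderings are identified if they differ by a rotation of positions. -/
def rotSetoidM (n : ℕ) : Setoid (ZMod (2 * n) ≃ ZMod (2 * n)) where
  r c d := ∃ t : ZMod (2 * n), ∀ x, c x = d (x + t)
  iseqv := by
    refine ⟨fun c => ⟨0, fun x => by rw [add_zero]⟩, ?_, ?_⟩
    · rintro c d ⟨t, h⟩
      refine ⟨-t, fun x => ?_⟩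
      rw [h (x + -t), add_assoc, neg_add_cancel, add_zero]
    · rintro c d e ⟨t, h⟩ ⟨s, h'⟩
      exact ⟨t + s, fun x => by rw [h, h', add_assoc]⟩

/-- The interval of length `r` starting at position `x` in the cyclic ordering `c`. -/
def mInterval (n r : ℕ) (c : ZMod (2 * n) ≃ ZMod (2 * n)) (x : ZMod (2 * n)) :
    Finset (ZMod (2 * n)) :=
  (Finset.range r).image (fun (i : ℕ) => c (x + (i : ZMod (2 * n))))

open Finset

namespace CMIS

variable (n : ℕ) [NeZero n]

instance : NeZero (2 * n) := ⟨by have := NeZero.ne n; omega⟩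

/-- pairing equiv -/
def E : ZMod n × Bool ≃ ZMod (2 * n) where
  toFun p := ((p.1.val + if p.2 then n else 0 : ℕ) : ZMod (2 * n))
  invFun v := (((v.val : ℕ) : ZMod n), decide (n ≤ v.val))
  right_inv := by
    intro v
    have hv := ZMod.val_lt v
    have h1 : ((v.val : ℕ) : ZMod n).val = v.val % n := ZMod.val_natCast n v.val
    have hn1 : 0 < n := Nat.pos_of_ne_zero (NeZero.ne n)
    simp only [h1, decide_eq_true_eq]
    have : v.val % n + (if n ≤ v.val then n else 0) = v.val := by
      split_ifs with h
      · have h2 : v.val % n = v.val - n := by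
          rw [Nat.mod_eq_sub_mod h, Nat.mod_eq_of_lt (by omega)]
        omega
      · rw [Nat.mod_eq_of_lt (by omega)]
        omega
    rw [this]
    exact ZMod.natCast_rightInverse v
  left_inv := by
    rintro ⟨j, b⟩
    have hj := ZMod.val_lt j
    have hval : (((j.val + if b then n else 0 : ℕ) : ZMod (2 * n))).val
        = j.val + if b then n else 0 :=
      ZMod.val_cast_of_lt (by split_ifs <;> omega)
    simp only [hval]
    refine Prod.ext ?_ ?_
    · show (((j.val + if b then n else 0 : ℕ)) : ZMod n) = j
      cases b <;> simp [ZMod.natCast_self, ZMod.natCast_rightInverse j]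
    · show decide (n ≤ j.val + if b then n else 0) = b
      cases b <;> simp <;> omega

lemma E_add_n (j : ZMod n) (b : Bool) :
    E n (j, b) + (n : ZMod (2 * n)) = E n (j, !b) := by
  cases b <;> simp only [E, Equiv.coe_fn_mk, Bool.not_true, Bool.not_false] <;> push_cast
  · ring
  · have : ((2 * n : ℕ) : ZMod (2 * n)) = 0 := ZMod.natCast_self _
    push_cast at this
    linear_combination this


def ob : Option Bool → Finset Bool
  | none => Finset.univ
  | some b => {b}

lemma mem_ob (b : Bool) (o : Option Bool) : b ∈ ob o ↔ o ≠ some (!b) := by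
  cases o with
  | none => simp [ob]
  | some c => cases b <;> cases c <;> simp [ob]

lemma card_ob (o : Option Bool) : (ob o).card = 1 + if o = none then 1 else 0 := by
  cases o <;> simp [ob]

lemma ob_nonempty (o : Option Bool) : (ob o).Nonempty := by
  cases o <;> simp [ob]

def Phi (f : ZMod n → Option Bool) : Finset (ZMod (2 * n)) :=
  Finset.univ.biUnion fun j => (ob (f j)).image fun b => E n (j, b)

def Psi (A : Finset (ZMod (2 * n))) (j : ZMod n) : Option Bool :=
  if E n (j, false) ∈ A then (if E n (j, true) ∈ A then none else some false)
  else some true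

lemma memE_Phi (f : ZMod n → Option Bool) (j : ZMod n) (b : Bool) :
    E n (j, b) ∈ Phi n f ↔ b ∈ ob (f j) := by
  simp only [Phi, mem_biUnion, mem_univ, true_and, mem_image]
  constructor
  · rintro ⟨j', b', hb', he⟩
    have := (E n).injective he
    obtain ⟨rfl, rfl⟩ := Prod.mk.injEq .. ▸ this
    exact hb'
  · exact fun hb => ⟨j, b, hb, rfl⟩

lemma card_Phi (f : ZMod n → Option Bool) :
    (Phi n f).card = n + (Finset.univ.filter fun j => f j = none).card := by
  rw [Phi, card_biUnion]
  · have h1 : ∀ j, ((ob (f j)).image fun b => E n (j, b)).card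
        = 1 + if f j = none then 1 else 0 := by
      intro j
      rw [Finset.card_image_of_injective _ (fun b b' h => by
        have := (E n).injective h
        exact (Prod.mk.injEq .. ▸ this).2), card_ob]
    simp only [h1]
    rw [Finset.sum_add_distrib, Finset.sum_const, card_univ, ZMod.card, smul_eq_mul, mul_one]
    congr 1
    rw [Finset.card_filter]
  · intro j _ j' _ hjj'
    simp only [Finset.disjoint_left, mem_image]
    rintro a ⟨b, _, rfl⟩ ⟨b', _, he⟩
    have := (E n).injective he
    exact hjj' ((Prod.mk.injEq .. ▸ this).1).symm

lemma PsiPhi (f : ZMod n → Option Bool) : Psi n (Phi n f) = f := by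
  funext j
  simp only [Psi, memE_Phi]
  rcases f j with _ | b
  · simp [ob]
  · cases b <;> simp [ob]

lemma PhiPsi (A : Finset (ZMod (2 * n)))
    (hcov : ∀ j, E n (j, false) ∈ A ∨ E n (j, true) ∈ A) :
    Phi n (Psi n A) = A := by
  ext v
  obtain ⟨⟨j, b⟩, rfl⟩ : ∃ p, E n p = v := ⟨(E n).symm v, Equiv.apply_symm_apply _ _⟩
  rw [memE_Phi]
  by_cases h0 : E n (j, false) ∈ A <;> by_cases h1 : E n (j, true) ∈ A
  · simp [Psi, h0, h1, ob]; cases b <;> simp [h0, h1]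
  · simp [Psi, h0, h1, ob]; cases b <;> simp [h0, h1]
  · simp [Psi, h0, h1, ob]; cases b <;> simp [h0, h1]
  · rcases hcov j with h | h <;> [exact absurd h h0; exact absurd h h1]

lemma cover_of_exists (A : Finset (ZMod (2 * n)))
    (hS : ∃ S ⊆ A, Indep n S ∧ S.card = n) :
    ∀ j, E n (j, false) ∈ A ∨ E n (j, true) ∈ A := by
  obtain ⟨S, hSA, hInd, hcard⟩ := hS
  have key : ∀ j, E n (j, false) ∈ S ∨ E n (j, true) ∈ S := by
    have hinj : Set.InjOn (fun v => ((E n).symm v).1) S := by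
      intro u hu w hw h
      have hu' : E n ((E n).symm u) = u := Equiv.apply_symm_apply _ _
      have hw' : E n ((E n).symm w) = w := Equiv.apply_symm_apply _ _
      by_cases hb : ((E n).symm u).2 = ((E n).symm w).2
      · rw [← hu', ← hw']
        congr 1
        exact Prod.ext h hb
      · exfalso
        have hb' : ((E n).symm u).2 = !((E n).symm w).2 := by
          rcases Bool.eq_false_or_eq_true ((E n).symm u).2 with h1 | h1 <;>
          rcases Bool.eq_false_or_eq_true ((E n).symm w).2 with h2 | h2 <;>
            simp_all
        have : u = w + (n : ZMod (2 * n)) := by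
          rw [← hu', ← hw', E_add_n]
          congr 1
          exact Prod.ext h hb'
        exact hInd w hw (this ▸ hu)
    have himg : S.image (fun v => ((E n).symm v).1) = Finset.univ := by
      apply Finset.eq_univ_of_card
      rw [Finset.card_image_of_injOn hinj, hcard, ZMod.card]
    intro j
    have hj : j ∈ S.image (fun v => ((E n).symm v).1) := himg ▸ Finset.mem_univ j
    obtain ⟨v, hv, hvj⟩ := Finset.mem_image.mp hj
    have hv' : E n (j, ((E n).symm v).2) = v := by
      conv_rhs => rw [← Equiv.apply_symm_apply (E n) v]
      congr 1
      exact Prod.ext hvj.symm rfl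
    rcases Bool.eq_false_or_eq_true ((E n).symm v).2 with h1 | h1
    · right; rwa [← h1, hv']
    · left; rwa [← h1, hv']
  intro j
  rcases key j with h | h
  · exact Or.inl (hSA h)
  · exact Or.inr (hSA h)

lemma exists_indep_Phi (f : ZMod n → Option Bool) :
    ∃ S ⊆ Phi n f, Indep n S ∧ S.card = n := by
  classical
  refine ⟨Finset.univ.image fun j => E n (j, (f j).getD false), ?_, ?_, ?_⟩
  · intro v hv
    obtain ⟨j, _, rfl⟩ := Finset.mem_image.mp hv
    rw [memE_Phi]
    rcases f j with _ | b <;> simp [ob]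
  · intro v hv
    obtain ⟨j, _, rfl⟩ := Finset.mem_image.mp hv
    rw [E_add_n]
    intro hmem
    obtain ⟨j', _, he⟩ := Finset.mem_image.mp hmem
    have := (E n).injective he
    obtain ⟨h1, h2⟩ := Prod.mk.injEq .. ▸ this
    subst h1
    exact absurd h2 (Bool.self_ne_not _)
  · rw [Finset.card_image_of_injective _ (fun j j' h => by
      have := (E n).injective h
      exact (Prod.mk.injEq .. ▸ this).1), card_univ, ZMod.card]


section Count

variable {α : Type*} [Fintype α] [DecidableEq α]

def noneset (f : α → Option Bool) : Finset α :=
  Finset.univ.filter fun i => f i = none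

lemma mem_noneset {f : α → Option Bool} {i : α} : i ∈ noneset f ↔ f i = none := by
  simp [noneset]

lemma card_compl_subtype (s : Finset α) :
    Fintype.card {j // j ∉ s} = Fintype.card α - s.card := by
  rw [Fintype.card_subtype]
  have : Finset.univ.filter (fun j => j ∉ s) = sᶜ := by
    ext j; simp
  rw [this, Finset.card_compl]

lemma count_fiber (s : Finset α) :
    (Finset.univ.filter fun f : α → Option Bool => noneset f = s).card
      = 2 ^ (Fintype.card α - s.card) := by
  rw [Finset.card_nbij' (t := (Finset.univ : Finset ({j // j ∉ s} → Bool)))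
      (i := fun f => fun j => (f j.1).getD false)
      (j := fun g => fun i => if h : i ∈ s then none else some (g ⟨i, h⟩))]
  · rw [Finset.card_univ, Fintype.card_fun, card_compl_subtype, Fintype.card_bool]
  · intro f _; exact Finset.mem_univ _
  · intro g _
    simp only [Finset.mem_coe, Finset.mem_filter, Finset.mem_univ, true_and]
    ext i
    rw [mem_noneset]
    by_cases h : i ∈ s <;> simp [h]
  · intro f hf
    simp only [Finset.mem_coe, Finset.mem_filter, Finset.mem_univ, true_and] at hf
    funext i
    by_cases h : i ∈ s
    · simp only [dif_pos h]
      exact (mem_noneset.mp (hf ▸ h)).symm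
    · simp only [dif_neg h]
      have : f i ≠ none := fun hc => h (hf ▸ mem_noneset.mpr hc)
      obtain ⟨b, hb⟩ := Option.ne_none_iff_exists'.mp this
      rw [hb]; rfl
  · intro g _
    funext j
    simp [j.2]

lemma count_fiber_pin (s : Finset α) (j₀ : α) (hj : j₀ ∉ s) (b₀ : Bool) :
    (Finset.univ.filter fun f : α → Option Bool => noneset f = s ∧ f j₀ = some b₀).card
      = 2 ^ (Fintype.card α - s.card - 1) := by
  rw [Finset.card_nbij' (t := (Finset.univ : Finset ({j // j ∉ insert j₀ s} → Bool)))
      (i := fun f => fun j => (f j.1).getD false)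
      (j := fun g => fun i =>
        if hi0 : i = j₀ then some b₀ else if h : i ∈ s then none
        else some (g ⟨i, fun hm => ((Finset.mem_insert.mp hm).elim hi0 h)⟩))]
  · rw [Finset.card_univ, Fintype.card_fun, card_compl_subtype, Fintype.card_bool,
      Finset.card_insert_of_notMem hj]
    congr 1
  · intro f _; exact Finset.mem_univ _
  · intro g _
    simp only [Finset.mem_coe, Finset.mem_filter, Finset.mem_univ, true_and]
    constructor
    · ext i
      rw [mem_noneset]
      by_cases hi0 : i = j₀
      · subst hi0; simp [hj]
      · by_cases h : i ∈ s <;> simp [hi0, h]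
    · simp
  · intro f hf
    simp only [Finset.mem_coe, Finset.mem_filter, Finset.mem_univ, true_and] at hf
    obtain ⟨hf1, hf2⟩ := hf
    funext i
    by_cases hi0 : i = j₀
    · subst hi0; simp [hf2]
    · simp only [dif_neg hi0]
      by_cases h : i ∈ s
      · simp only [dif_pos h]
        exact (mem_noneset.mp (hf1 ▸ h)).symm
      · simp only [dif_neg h]
        have : f i ≠ none := fun hc => h (hf1 ▸ mem_noneset.mpr hc)
        obtain ⟨b, hb⟩ := Option.ne_none_iff_exists'.mp this
        rw [hb]; rfl
  · intro g _
    funext j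
    have h1 : j.1 ≠ j₀ := fun hc => j.2 (Finset.mem_insert.mpr (Or.inl hc))
    have h2 : j.1 ∉ s := fun hc => j.2 (Finset.mem_insert.mpr (Or.inr hc))
    simp [h1, h2]

lemma card_subsets_mem (j₀ : α) (k : ℕ) (hk : 1 ≤ k) :
    ((Finset.univ.powersetCard k).filter (fun s : Finset α => j₀ ∈ s)).card
      = (Fintype.card α - 1).choose (k - 1) := by
  rw [Finset.card_nbij' (t := (Finset.univ.erase j₀).powersetCard (k - 1))
      (i := fun s => s.erase j₀) (j := fun s => insert j₀ s)]
  · rw [Finset.card_powersetCard, Finset.card_erase_of_mem (Finset.mem_univ _),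
      Finset.card_univ]
  · intro s hs
    simp only [Finset.mem_coe, Finset.mem_filter, Finset.mem_powersetCard] at hs
    obtain ⟨⟨_, hcard⟩, hmem⟩ := hs
    rw [Finset.mem_coe, Finset.mem_powersetCard]
    exact ⟨Finset.erase_subset_erase _ (Finset.subset_univ s),
      by rw [Finset.card_erase_of_mem hmem, hcard]⟩
  · intro s hs
    rw [Finset.mem_coe, Finset.mem_powersetCard] at hs
    obtain ⟨hsub, hcard⟩ := hs
    have hj0 : j₀ ∉ s := fun hc => (Finset.mem_erase.mp (hsub hc)).1 rfl
    simp only [Finset.mem_coe, Finset.mem_filter, Finset.mem_powersetCard]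
    exact ⟨⟨Finset.subset_univ _, by rw [Finset.card_insert_of_notMem hj0, hcard]; omega⟩,
      Finset.mem_insert_self _ _⟩
  · intro s hs
    simp only [Finset.mem_coe, Finset.mem_filter] at hs
    exact Finset.insert_erase hs.2
  · intro s hs
    rw [Finset.mem_coe, Finset.mem_powersetCard] at hs
    have hj0 : j₀ ∉ s := fun hc => (Finset.mem_erase.mp (hs.1 hc)).1 rfl
    exact Finset.erase_insert hj0

lemma countN1 (j₀ : α) (k : ℕ) (hk : 1 ≤ k) :
    (Finset.univ.filter fun f : α → Option Bool =>
        (noneset f).card = k ∧ f j₀ = none).card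
      = (Fintype.card α - 1).choose (k - 1) * 2 ^ (Fintype.card α - k) := by
  rw [Finset.card_eq_sum_card_fiberwise
      (f := noneset) (t := (Finset.univ.powersetCard k).filter (fun s => j₀ ∈ s))
      (fun f hf => by
        simp only [Finset.mem_coe, Finset.mem_filter, Finset.mem_univ, true_and] at hf
        simp only [Finset.mem_coe, Finset.mem_filter, Finset.mem_powersetCard]
        exact ⟨⟨Finset.subset_univ _, hf.1⟩, mem_noneset.mpr hf.2⟩)]
  rw [Finset.sum_congr rfl (fun s hs => ?_), Finset.sum_const, smul_eq_mul,
    card_subsets_mem j₀ k hk]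
  simp only [Finset.mem_filter, Finset.mem_powersetCard] at hs
  obtain ⟨⟨_, hcard⟩, hmem⟩ := hs
  have : (Finset.univ.filter fun f : α → Option Bool =>
      ((noneset f).card = k ∧ f j₀ = none)).filter (fun f => noneset f = s)
      = Finset.univ.filter fun f => noneset f = s := by
    rw [Finset.filter_filter]
    apply Finset.filter_congr
    intro f _
    constructor
    · exact fun h => h.2
    · intro h
      exact ⟨⟨by rw [h, hcard], mem_noneset.mp (h ▸ hmem)⟩, h⟩
  rw [this, count_fiber, hcard]

lemma countN2 (j₀ : α) (k : ℕ) (b₀ : Bool) :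
    (Finset.univ.filter fun f : α → Option Bool =>
        (noneset f).card = k ∧ f j₀ = some b₀).card
      = (Fintype.card α - 1).choose k * 2 ^ (Fintype.card α - k - 1) := by
  rw [Finset.card_eq_sum_card_fiberwise
      (f := noneset) (t := (Finset.univ.erase j₀).powersetCard k)
      (fun f hf => by
        simp only [Finset.mem_coe, Finset.mem_filter, Finset.mem_univ, true_and] at hf
        rw [Finset.mem_coe, Finset.mem_powersetCard]
        refine ⟨fun i hi => Finset.mem_erase.mpr ⟨?_, Finset.mem_univ _⟩, hf.1⟩
        rintro rfl
        rw [mem_noneset, hf.2] at hi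
        exact Option.some_ne_none _ hi)]
  rw [Finset.sum_congr rfl (fun s hs => ?_), Finset.sum_const, smul_eq_mul,
    Finset.card_powersetCard, Finset.card_erase_of_mem (Finset.mem_univ _), Finset.card_univ]
  rw [Finset.mem_powersetCard] at hs
  obtain ⟨hsub, hcard⟩ := hs
  have hj0 : j₀ ∉ s := fun hc => (Finset.mem_erase.mp (hsub hc)).1 rfl
  have : (Finset.univ.filter fun f : α → Option Bool =>
      ((noneset f).card = k ∧ f j₀ = some b₀)).filter (fun f => noneset f = s)
      = Finset.univ.filter fun f => noneset f = s ∧ f j₀ = some b₀ := by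
    rw [Finset.filter_filter]
    apply Finset.filter_congr
    intro f _
    constructor
    · exact fun h => ⟨h.2, h.1.2⟩
    · exact fun h => ⟨⟨by rw [h.1, hcard], h.2⟩, h.1⟩
  rw [this, count_fiber_pin s j₀ hj0 b₀, hcard]

end Count

end CMIS

/-- For `n < r ≤ 2n` and a vertex `x` of `M_n`, the number of `r`-subsets of `V(M_n)`
containing `x` and containing a maximum independent set equals
`2^(2n-r) C(n-1, r-n-1) + 2^(2n-r-1) C(n-1, r-n)`. -/
theorem card_max_indep_star (n r : ℕ) (hn : n < r) (hr : r ≤ 2 * n) (x : ZMod (2 * n)) :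
    Nat.card {A : Finset (ZMod (2 * n)) //
        A.card = r ∧ x ∈ A ∧ ∃ S ⊆ A, Indep n S ∧ S.card = n}
      = 2 ^ (2 * n - r) * (n - 1).choose (r - n - 1)
        + 2 ^ (2 * n - r - 1) * (n - 1).choose (r - n) := by
  have hn0 : 0 < n := by omega
  haveI : NeZero n := ⟨hn0.ne'⟩
  obtain ⟨⟨j₀, b₀⟩, hx⟩ : ∃ p, CMIS.E n p = x := ⟨(CMIS.E n).symm x, Equiv.apply_symm_apply _ _⟩
  have e : {A : Finset (ZMod (2 * n)) // A.card = r ∧ x ∈ A ∧ ∃ S ⊆ A, Indep n S ∧ S.card = n}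
      ≃ {f : ZMod n → Option Bool //
          (CMIS.noneset f).card = r - n ∧ f j₀ ≠ some (!b₀)} := by
    refine ⟨fun A => ⟨CMIS.Psi n A.1, ?_⟩, fun f => ⟨CMIS.Phi n f.1, ?_⟩, ?_, ?_⟩
    · obtain ⟨A, hcard, hxA, hS⟩ := A
      dsimp only
      have hcov := CMIS.cover_of_exists n A hS
      have hA : CMIS.Phi n (CMIS.Psi n A) = A := CMIS.PhiPsi n A hcov
      constructor
      · have h1 := CMIS.card_Phi n (CMIS.Psi n A)
        rw [hA, hcard] at h1
        have h2 : (Finset.univ.filter fun j => CMIS.Psi n A j = none)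
            = CMIS.noneset (CMIS.Psi n A) := rfl
        rw [h2] at h1
        omega
      · have hxA' : CMIS.E n (j₀, b₀) ∈ CMIS.Phi n (CMIS.Psi n A) := by
          rw [hA, hx]; exact hxA
        rw [CMIS.memE_Phi, CMIS.mem_ob] at hxA'
        exact hxA'
    · obtain ⟨f, hk, hb⟩ := f
      dsimp only
      refine ⟨?_, ?_, CMIS.exists_indep_Phi n f⟩
      · rw [CMIS.card_Phi]
        have h2 : (Finset.univ.filter fun j => f j = none) = CMIS.noneset f := rfl
        rw [h2, hk]
        omega
      · rw [← hx, CMIS.memE_Phi, CMIS.mem_ob]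
        exact hb
    · intro A
      apply Subtype.ext
      exact CMIS.PhiPsi n A.1 (CMIS.cover_of_exists n A.1 A.2.2.2)
    · intro f
      apply Subtype.ext
      exact CMIS.PsiPhi n f.1
  rw [Nat.card_congr e, Nat.card_eq_fintype_card, Fintype.card_subtype]
  have hsplit : Finset.univ.filter (fun f : ZMod n → Option Bool =>
        (CMIS.noneset f).card = r - n ∧ f j₀ ≠ some (!b₀))
      = (Finset.univ.filter fun f => (CMIS.noneset f).card = r - n ∧ f j₀ = none)
        ∪ (Finset.univ.filter fun f => (CMIS.noneset f).card = r - n ∧ f j₀ = some b₀) := by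
    rw [← Finset.filter_or]
    apply Finset.filter_congr
    intro f _
    have : (f j₀ ≠ some (!b₀)) ↔ (f j₀ = none ∨ f j₀ = some b₀) := by
      rcases f j₀ with _ | c
      · simp
      · cases c <;> cases b₀ <;> simp
    rw [this, and_or_left]
  rw [hsplit, Finset.card_union_of_disjoint (by
    rw [Finset.disjoint_left]
    intro f h1 h2
    simp only [Finset.mem_filter] at h1 h2
    rw [h1.2.2] at h2
    exact Option.some_ne_none _ h2.2.2.symm)]
  rw [CMIS.countN1 j₀ (r - n) (by omega), CMIS.countN2 j₀ (r - n) b₀, ZMod.card]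
  have h2 : n - (r - n) = 2 * n - r := by omega
  rw [h2]
  ring
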